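/- Let (M,T^{1,0}) be a nondegenerate partially integrable almost CR manifold, {Z_α} a local frame of T^{1,0}, and μ_α{}^{β̄} a tensor field; set Ẑ_α := Z_α + μ_α{}^{β̄} Z_{β̄}, which defines a new almost CR structure on M with the same contact distribution H. Then the new almost CR structure is partially integrable if and only if μ_{αβ} = μ_{βα}, where the index is lowered by the Levi form of (M,T^{1,0}) associated to any pseudohermitian structure. -/
import Mathlib


/-!
# Statement 16 (Proposition 6.1: deformations of partially integrable almost CR
structures)

Let `(M,T^{1,0})` be a nondegenerate partially integrable almost CR manifold, `{Z_α}` a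
local frame of `T^{1,0}` and `μ_α{}^{β̄}` a tensor field; set
`Ẑ_α := Z_α + μ_α{}^{β̄} Z_{β̄}`, which defines a new almost CR structure with the same
contact distribution `H`.  The new structure is partially integrable iff
`μ_{αβ} = μ_{βα}` (index lowered by the Levi form).

Partial integrability of the structure spanned by `{Ẑ_α}` means
`θ([Ẑ_α, Ẑ_β]) = 0` for all `α, β`, and the Levi form is recovered from brackets by
`h_{αβ̄} = iθ([Z_α, Z_β̄])`.  The smooth structure is abstracted: complexified vector
fields form a module over `M → ℂ` with a Lie bracket acting on functions.
-/

/-- An abstract model of a nondegenerate partially integrable almost CR manifold with a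
pseudohermitian structure `θ` and a local frame `{Z_α}` of `T^{1,0}` with conjugate
frame `{Z_ᾱ}`. -/
structure CRDeformationFrame (n : ℕ) (M : Type*) (VC : Type*)
    [AddCommGroup VC] [Module (M → ℂ) VC] where
  /-- the Lie bracket of complexified vector fields -/
  bracket : VC → VC → VC
  /-- action of complexified vector fields on functions -/
  act : VC → (M → ℂ) → (M → ℂ)
  bracket_add_left : ∀ X Y Z, bracket (X + Y) Z = bracket X Z + bracket Y Z
  bracket_antisymm : ∀ X Y, bracket X Y = -bracket Y X
  bracket_smul_right : ∀ X (f : M → ℂ) Y,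
    bracket X (f • Y) = f • bracket X Y + act X f • Y
  /-- the pseudohermitian structure `θ` (complexified), annihilating
  `T^{1,0} ⊕ conj T^{1,0}` -/
  theta : VC → M → ℂ
  theta_add : ∀ X Y, theta (X + Y) = theta X + theta Y
  theta_smul : ∀ (f : M → ℂ) X, theta (f • X) = f * theta X
  /-- the frame of `T^{1,0}` -/
  Z : Fin n → VC
  /-- its conjugate frame `Z_ᾱ = conj Z_α`, spanning `conj T^{1,0}` -/
  Zb : Fin n → VC
  theta_Z : ∀ α, theta (Z α) = 0
  theta_Zb : ∀ α, theta (Zb α) = 0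
  /-- partial integrability of `(M, T^{1,0})` -/
  partialInt : ∀ α β, theta (bracket (Z α) (Z β)) = 0
  partialIntBar : ∀ α β, theta (bracket (Zb α) (Zb β)) = 0
  /-- nondegeneracy: the Levi form `h_{αβ̄} = iθ([Z_α, Z_β̄])` is nondegenerate -/
  nondeg : ∀ p : M,
    (Matrix.of fun α β : Fin n => Complex.I * theta (bracket (Z α) (Zb β)) p).det ≠ 0

namespace CRDeformationFrame

variable {n : ℕ} {M VC : Type*} [AddCommGroup VC] [Module (M → ℂ) VC]
variable (F : CRDeformationFrame n M VC)

/-- the Levi form `h_{αβ̄} = iθ([Z_α, Z_β̄])` associated to `θ` -/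
noncomputable def leviC (α β : Fin n) : M → ℂ := fun p =>
  Complex.I * F.theta (F.bracket (F.Z α) (F.Zb β)) p

/-- the frame `Ẑ_α = Z_α + μ_α{}^{β̄} Z_β̄` of the deformed almost CR structure -/
noncomputable def Zhat (μ : Fin n → Fin n → M → ℂ) (α : Fin n) : VC :=
  F.Z α + ∑ β, μ α β • F.Zb β

/-- `μ_{αβ} = μ_α{}^{γ̄} h_{βγ̄}` (index lowered by the Levi form) -/
noncomputable def lowerMu (μ : Fin n → Fin n → M → ℂ) (α β : Fin n) : M → ℂ := fun p =>
  ∑ γ, μ α γ p * F.leviC β γ p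

end CRDeformationFrame

section Aux

variable {n : ℕ} {M VC : Type*} [AddCommGroup VC] [Module (M → ℂ) VC]
variable (F : CRDeformationFrame n M VC)

lemma CRDeformationFrame.theta_zero : F.theta 0 = 0 := by
  have h := F.theta_add 0 0
  rw [add_zero] at h
  exact (left_eq_add.mp h)

lemma CRDeformationFrame.theta_sum {ι : Type*} (s : Finset ι) (g : ι → VC) :
    F.theta (∑ i ∈ s, g i) = ∑ i ∈ s, F.theta (g i) :=
  map_sum (AddMonoidHom.mk' F.theta F.theta_add) g s

lemma CRDeformationFrame.theta_neg (X : VC) : F.theta (-X) = -F.theta X :=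
  map_neg (AddMonoidHom.mk' F.theta F.theta_add) X

lemma CRDeformationFrame.bracket_add_right (X Y Z : VC) :
    F.bracket X (Y + Z) = F.bracket X Y + F.bracket X Z := by
  rw [F.bracket_antisymm, F.bracket_add_left, F.bracket_antisymm Y X,
    F.bracket_antisymm Z X]
  abel

lemma CRDeformationFrame.bracket_sum_right {ι : Type*} (X : VC) (s : Finset ι)
    (g : ι → VC) : F.bracket X (∑ i ∈ s, g i) = ∑ i ∈ s, F.bracket X (g i) :=
  map_sum (AddMonoidHom.mk' (F.bracket X) (F.bracket_add_right X)) g s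

lemma CRDeformationFrame.theta_bracket_smul_right (X : VC) (f : M → ℂ) (α : Fin n) :
    F.theta (F.bracket X (f • F.Zb α)) = f * F.theta (F.bracket X (F.Zb α)) := by
  rw [F.bracket_smul_right, F.theta_add, F.theta_smul, F.theta_smul, F.theta_Zb]
  simp

/-- the key bracket computation -/
lemma CRDeformationFrame.theta_bracket_Zhat (μ : Fin n → Fin n → M → ℂ) (α β : Fin n) :
    F.theta (F.bracket (F.Zhat μ α) (F.Zhat μ β)) =
      (∑ δ, μ β δ * F.theta (F.bracket (F.Z α) (F.Zb δ)))
        - ∑ γ, μ α γ * F.theta (F.bracket (F.Z β) (F.Zb γ)) := by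
  have hZbS : ∀ (γ : Fin n) (ν : Fin n → Fin n → M → ℂ) (β : Fin n),
      F.theta (F.bracket (F.Zb γ) (∑ δ, ν β δ • F.Zb δ)) = 0 := by
    intro γ ν β
    rw [F.bracket_sum_right, F.theta_sum]
    refine Finset.sum_eq_zero fun δ _ => ?_
    rw [F.theta_bracket_smul_right, F.partialIntBar]
    simp
  have hZS : ∀ (α : Fin n) (ν : Fin n → Fin n → M → ℂ) (β : Fin n),
      F.theta (F.bracket (F.Z α) (∑ δ, ν β δ • F.Zb δ)) =
        ∑ δ, ν β δ * F.theta (F.bracket (F.Z α) (F.Zb δ)) := by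
    intro α ν β
    rw [F.bracket_sum_right, F.theta_sum]
    exact Finset.sum_congr rfl fun δ _ => F.theta_bracket_smul_right _ _ _
  have hSS : F.theta (F.bracket (∑ γ, μ α γ • F.Zb γ) (∑ δ, μ β δ • F.Zb δ)) = 0 := by
    rw [F.bracket_antisymm, F.bracket_sum_right, F.theta_neg, F.theta_sum]
    refine neg_eq_zero.mpr (Finset.sum_eq_zero fun γ _ => ?_)
    rw [F.theta_bracket_smul_right, F.bracket_antisymm, F.theta_neg, hZbS]
    simp
  have hSZ : F.theta (F.bracket (∑ γ, μ α γ • F.Zb γ) (F.Z β)) =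
      -∑ γ, μ α γ * F.theta (F.bracket (F.Z β) (F.Zb γ)) := by
    rw [F.bracket_antisymm, F.bracket_sum_right, F.theta_neg, F.theta_sum]
    congr 1
    exact Finset.sum_congr rfl fun γ _ => F.theta_bracket_smul_right _ _ _
  unfold CRDeformationFrame.Zhat
  rw [F.bracket_add_left, F.bracket_add_right, F.bracket_add_right, F.theta_add,
    F.theta_add, F.theta_add, F.partialInt, hZS, hSZ, hSS]
  abel

end Aux

/-- **Proposition 6.1.**  The almost CR structure spanned by
`Ẑ_α = Z_α + μ_α{}^{β̄}Z_β̄` is partially integrable iff `μ_{αβ} = μ_{βα}`. -/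
theorem deformed_structure_partially_integrable_iff (n : ℕ) (M VC : Type*)
    [AddCommGroup VC] [Module (M → ℂ) VC] (F : CRDeformationFrame n M VC)
    (μ : Fin n → Fin n → M → ℂ) :
    (∀ (α β : Fin n) (p : M), F.theta (F.bracket (F.Zhat μ α) (F.Zhat μ β)) p = 0) ↔
    (∀ (α β : Fin n) (p : M), F.lowerMu μ α β p = F.lowerMu μ β α p) := by
  have e : ∀ a b : ℂ, Complex.I * (a * (Complex.I * b)) = -(a * b) := by
    intro a b
    rw [show Complex.I * (a * (Complex.I * b)) = Complex.I * Complex.I * (a * b) by ring,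
      Complex.I_mul_I]
    ring
  have key : ∀ (α β : Fin n) (p : M),
      F.theta (F.bracket (F.Zhat μ α) (F.Zhat μ β)) p =
        Complex.I * (F.lowerMu μ α β p - F.lowerMu μ β α p) := by
    intro α β p
    have h := congrFun (F.theta_bracket_Zhat μ α β) p
    rw [h]
    simp only [CRDeformationFrame.lowerMu, CRDeformationFrame.leviC, Pi.sub_apply,
      Finset.sum_apply, Pi.mul_apply]
    rw [mul_sub, Finset.mul_sum, Finset.mul_sum]
    simp only [e, Finset.sum_neg_distrib]
    ring
  constructor
  · intro h α β p
    have h0 := h α β p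
    rw [key] at h0
    have h1 := (mul_eq_zero.mp h0).resolve_left Complex.I_ne_zero
    exact sub_eq_zero.mp h1
  · intro h α β p
    rw [key, h α β p]
    simp
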